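/- Let ψ : 𝔫⁺ → ℂ be a Lie algebra homomorphism with ψ(L_1) ≠ 0, ψ(L_2) ≠ 0, ψ(I_1) ≠ 0. For every integer m ≥ 0, every pseudopartition λ and every partition μ, one has maxdeg([L_m, L_{−λ}I_{−μ}]w) ≤ |λ| + |μ| − m + 2 in M_ψ. -/

import Mathlib

/-!
Common setup: the twisted Heisenberg–Virasoro algebra `𝒱`, its subalgebra `𝔫⁺`,
the universal Whittaker module `M_ψ`, the quotients `L_{ψ,ξ}`, and the notions of
Whittaker vectors/modules, degrees, etc.
-/

open UniversalEnvelopingAlgebra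

attribute [local instance 100] LieRing.ofAssociativeRing

/-- The twisted Heisenberg–Virasoro algebra: a complex Lie algebra with basis
`{L k, I k (k : ℤ), z 0, z 1, z 2}` (here `z 0, z 1, z 2` are the paper's `z₁, z₂, z₃`)
and the prescribed brackets. -/
class THV (V : Type) [LieRing V] [LieAlgebra ℂ V] : Type where
  L : ℤ → V
  I : ℤ → V
  z : Fin 3 → V
  basis : Module.Basis (ℤ ⊕ ℤ ⊕ Fin 3) ℂ V
  basis_L : ∀ k : ℤ, basis (Sum.inl k) = L k
  basis_I : ∀ k : ℤ, basis (Sum.inr (Sum.inl k)) = I k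
  basis_z : ∀ i : Fin 3, basis (Sum.inr (Sum.inr i)) = z i
  lie_LL : ∀ k j : ℤ, ⁅L k, L j⁆ =
    ((j : ℂ) - (k : ℂ)) • L (k + j) +
      (if j = -k then ((k : ℂ) ^ 3 - (k : ℂ)) / 12 else 0) • z 0
  lie_LI : ∀ k j : ℤ, ⁅L k, I j⁆ =
    (j : ℂ) • I (k + j) + (if j = -k then (k : ℂ) ^ 2 - (k : ℂ) else 0) • z 1
  lie_II : ∀ k j : ℤ, ⁅I k, I j⁆ = (if j = -k then (k : ℂ) else 0) • z 2
  lie_z : ∀ i : Fin 3, ∀ x : V, ⁅z i, x⁆ = 0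

namespace THV

variable (V : Type) [LieRing V] [LieAlgebra ℂ V] [THV V]

/-- `𝔫⁺ = span {L k, I k : k ≥ 1}` (a Lie subalgebra of `𝒱`). -/
def nPlus : LieSubalgebra ℂ V :=
  LieSubalgebra.lieSpan ℂ V {x | ∃ k : ℤ, 1 ≤ k ∧ (x = L k ∨ x = I k)}

theorem L_mem_nPlus {k : ℤ} (h : 1 ≤ k) : (L k : V) ∈ nPlus V :=
  LieSubalgebra.subset_lieSpan ⟨k, h, Or.inl rfl⟩

theorem I_mem_nPlus {k : ℤ} (h : 1 ≤ k) : (I k : V) ∈ nPlus V :=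
  LieSubalgebra.subset_lieSpan ⟨k, h, Or.inr rfl⟩

/-- A Whittaker vector of type `ψ` in a `𝒱`-module `W`. -/
def IsWhittakerVector (ψ : nPlus V →ₗ⁅ℂ⁆ ℂ) {W : Type} [AddCommGroup W] [Module ℂ W]
    [LieRingModule V W] (w : W) : Prop :=
  ∀ x : nPlus V, ⁅(x : V), w⁆ = ψ x • w

/-- The universal enveloping algebra `U(𝒱)`. -/
abbrev UEA := UniversalEnvelopingAlgebra ℂ V

/-- The canonical embedding `𝒱 → U(𝒱)`. -/
noncomputable def ιV : V →ₗ⁅ℂ⁆ UEA V := UniversalEnvelopingAlgebra.ι ℂ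

/-- The four central elements `z₀ = I₀, z₁, z₂, z₃` of `U(𝒱)`. -/
noncomputable def zElt : Fin 4 → UEA V
  | 0 => ιV V (I 0)
  | 1 => ιV V (z 0)
  | 2 => ιV V (z 1)
  | 3 => ιV V (z 2)

/-- The left ideal of `U(𝒱)` generated by `{x - ψ(x) : x ∈ 𝔫⁺}`;
`M_ψ = U(𝒱) ⊗_{U(𝔫⁺)} ℂ_ψ` is canonically the quotient by this left ideal. -/
noncomputable def whittakerIdeal (ψ : nPlus V →ₗ⁅ℂ⁆ ℂ) : Submodule (UEA V) (UEA V) :=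
  Submodule.span (UEA V)
    {u | ∃ x : nPlus V, u = ιV V (x : V) - algebraMap ℂ (UEA V) (ψ x)}

/-- The universal Whittaker module `M_ψ`. -/
abbrev Mpsi (ψ : nPlus V →ₗ⁅ℂ⁆ ℂ) := (UEA V) ⧸ whittakerIdeal V ψ

/-- Any quotient of `U(𝒱)` (as a left module over itself) is a `𝒱`-module. -/
noncomputable instance (p : Submodule (UEA V) (UEA V)) : LieRingModule V ((UEA V) ⧸ p) :=
  letI : LieRingModule (UEA V) ((UEA V) ⧸ p) := LieRingModule.ofAssociativeModule
  LieRingModule.compLieHom _ (ιV V)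

noncomputable instance (p : Submodule (UEA V) (UEA V)) : LieModule ℂ V ((UEA V) ⧸ p) :=
  letI : LieRingModule (UEA V) ((UEA V) ⧸ p) := LieRingModule.ofAssociativeModule
  letI : LieModule ℂ (UEA V) ((UEA V) ⧸ p) := LieModule.ofAssociativeModule
  LieModule.compLieHom _ (ιV V)

/-- The cyclic Whittaker vector `w = 1 ⊗ 1` of `M_ψ`. -/
noncomputable def mw (ψ : nPlus V →ₗ⁅ℂ⁆ ℂ) : Mpsi V ψ :=
  Submodule.Quotient.mk 1

/-- The submodule `Σ_{i} (z_i − ξ_i·1) M_ψ` of `M_ψ`. -/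
noncomputable def centralSub (ψ : nPlus V →ₗ⁅ℂ⁆ ℂ) (ξ : Fin 4 → ℂ) :
    Submodule (UEA V) (Mpsi V ψ) :=
  Submodule.span (UEA V)
    {m | ∃ i : Fin 4, ∃ y : Mpsi V ψ, m = (zElt V i - algebraMap ℂ (UEA V) (ξ i)) • y}

/-- The Whittaker module `L_{ψ,ξ} = M_ψ / Σᵢ (z_i − ξ_i·1) M_ψ`. -/
abbrev Lpsixi (ψ : nPlus V →ₗ⁅ℂ⁆ ℂ) (ξ : Fin 4 → ℂ) :=
  Mpsi V ψ ⧸ centralSub V ψ ξ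

noncomputable instance (ψ : nPlus V →ₗ⁅ℂ⁆ ℂ) (q : Submodule (UEA V) (Mpsi V ψ)) :
    LieRingModule V ((Mpsi V ψ) ⧸ q) :=
  letI : LieRingModule (UEA V) ((Mpsi V ψ) ⧸ q) := LieRingModule.ofAssociativeModule
  LieRingModule.compLieHom _ (ιV V)

noncomputable instance (ψ : nPlus V →ₗ⁅ℂ⁆ ℂ) (q : Submodule (UEA V) (Mpsi V ψ)) :
    LieModule ℂ V ((Mpsi V ψ) ⧸ q) :=
  letI : LieRingModule (UEA V) ((Mpsi V ψ) ⧸ q) := LieRingModule.ofAssociativeModule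
  letI : LieModule ℂ (UEA V) ((Mpsi V ψ) ⧸ q) := LieModule.ofAssociativeModule
  LieModule.compLieHom _ (ιV V)

/-- The image `w̄` of the cyclic Whittaker vector in `L_{ψ,ξ}`. -/
noncomputable def lw (ψ : nPlus V →ₗ⁅ℂ⁆ ℂ) (ξ : Fin 4 → ℂ) : Lpsixi V ψ ξ :=
  Submodule.Quotient.mk (mw V ψ)

/-- The size `|λ|` of a pseudopartition recorded as its multiplicity function. -/
def pdeg (f : ℕ →₀ ℕ) : ℕ := f.sum fun k m => k * m

/-- `L_{-λ} = L_{-λ_s} ⋯ L_{-λ_1} = ⋯ L_{-1}^{λ(1)} L_0^{λ(0)} ∈ U(𝒱)`,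
for a pseudopartition `λ` given by its multiplicity function. -/
noncomputable def Lword (lam : ℕ →₀ ℕ) : UEA V :=
  (((List.range (lam.support.sup id + 1)).reverse).map
    fun k : ℕ => (ιV V (L (-(k : ℤ)))) ^ (lam k)).prod

/-- `I_{-μ} = I_{-μ_r} ⋯ I_{-μ_1} = ⋯ I_{-2}^{μ(2)} I_{-1}^{μ(1)} ∈ U(𝒱)`. -/
noncomputable def Iword (mu : ℕ →₀ ℕ) : UEA V :=
  (((List.range (mu.support.sup id + 1)).reverse).map
    fun k : ℕ => (ιV V (I (-(k : ℤ)))) ^ (mu k)).prod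

/-- `z^t = z₀^{t₀} z₁^{t₁} z₂^{t₂} z₃^{t₃} ∈ U(𝒱)`. -/
noncomputable def zword (t : Fin 4 → ℕ) : UEA V :=
  ((List.finRange 4).map fun i => (zElt V i) ^ (t i)).prod

/-- Index type for the PBW-type basis of `M_ψ`: a 4-tuple `t`, a pseudopartition `λ`,
and a partition `μ` (a multiplicity function with `μ(0) = 0`). -/
abbrev WIdx : Type := (Fin 4 → ℕ) × (ℕ →₀ ℕ) × {g : ℕ →₀ ℕ // g 0 = 0}

/-- The property that `B` is the standard basis `{z^t L_{-λ} I_{-μ} w}` of `M_ψ`. -/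
def IsStdBasis (ψ : nPlus V →ₗ⁅ℂ⁆ ℂ) (B : Module.Basis WIdx ℂ (Mpsi V ψ)) : Prop :=
  ∀ (t : Fin 4 → ℕ) (lam : ℕ →₀ ℕ) (mu : {g : ℕ →₀ ℕ // g 0 = 0}),
    B (t, lam, mu) = (zword V t * Lword V lam * Iword V mu.1) • mw V ψ

/-- `maxdeg` of a vector of `M_ψ` with respect to the standard basis
(`⊥` plays the role of `-∞`). -/
noncomputable def maxdeg (ψ : nPlus V →ₗ⁅ℂ⁆ ℂ) (B : Module.Basis WIdx ℂ (Mpsi V ψ))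
    (v : Mpsi V ψ) : WithBot ℤ :=
  ((B.repr v).support.image fun p => ((pdeg p.2.1 : ℤ) + (pdeg p.2.2.1 : ℤ))).max

/-- `max_{L_0}` of a vector of `M_ψ`: the largest `λ(0)` over basis vectors occurring
with a nonzero coefficient. -/
noncomputable def maxL0 (ψ : nPlus V →ₗ⁅ℂ⁆ ℂ) (B : Module.Basis WIdx ℂ (Mpsi V ψ))
    (v : Mpsi V ψ) : WithBot ℤ :=
  ((B.repr v).support.image fun p => (p.2.1 0 : ℤ)).max

end THV

section AuxDev
set_option linter.unusedSectionVars false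
open THV
variable (V : Type) [LieRing V] [LieAlgebra ℂ V] [THV V]

/-- `X_L k = ι(L k)` in `U(𝒱)`. -/
noncomputable def XL (k : ℤ) : UEA V := ιV V (THV.L k)
/-- `X_I k = ι(I k)` in `U(𝒱)`. -/
noncomputable def XI (k : ℤ) : UEA V := ιV V (THV.I k)
/-- `Z i = ι(z i)` in `U(𝒱)`. -/
noncomputable def ZE (i : Fin 3) : UEA V := ιV V (THV.z i)

lemma ULL (a b : ℤ) : XL V a * XL V b = XL V b * XL V a + ((b : ℂ) - a) • XL V (a + b)
    + (if b = -a then ((a:ℂ)^3 - a)/12 else 0) • ZE V 0 := by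
  have h := (ιV V).map_lie (x := THV.L a) (y := THV.L b)
  rw [THV.lie_LL, Ring.lie_def, map_add, map_smul, map_smul] at h
  simp only [XL, ZE]
  have h2 := sub_eq_iff_eq_add.mp h.symm
  rw [h2]; abel

lemma ULI (a b : ℤ) : XL V a * XI V b = XI V b * XL V a + (b : ℂ) • XI V (a + b)
    + (if b = -a then (a:ℂ)^2 - a else 0) • ZE V 1 := by
  have h := (ιV V).map_lie (x := THV.L a) (y := THV.I b)
  rw [THV.lie_LI, Ring.lie_def, map_add, map_smul, map_smul] at h
  simp only [XL, XI, ZE]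
  have h2 := sub_eq_iff_eq_add.mp h.symm
  rw [h2]; abel

lemma UII (a b : ℤ) : XI V a * XI V b = XI V b * XI V a
    + (if b = -a then (a:ℂ) else 0) • ZE V 2 := by
  have h := (ιV V).map_lie (x := THV.I a) (y := THV.I b)
  rw [THV.lie_II, Ring.lie_def, map_smul] at h
  simp only [XI, ZE]
  have h2 := sub_eq_iff_eq_add.mp h.symm
  rw [h2]; abel

/-- Elements commuting with the image of `ι` are central. -/
lemma commute_all {c : UEA V} (h : ∀ v : V, Commute c (ιV V v)) (u : UEA V) :
    Commute c u := by
  obtain ⟨t, rfl⟩ : ∃ t, UniversalEnvelopingAlgebra.mkAlgHom ℂ V t = u :=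
    (UniversalEnvelopingAlgebra.ringCon ℂ V).mk'_surjective u
  induction t using TensorAlgebra.induction with
  | algebraMap r =>
      rw [AlgHom.commutes]
      exact (Algebra.commutes r c).symm
  | ι v =>
      have h2 : (UniversalEnvelopingAlgebra.mkAlgHom ℂ V) (TensorAlgebra.ι ℂ v)
          = ιV V v := by
        rw [ιV, UniversalEnvelopingAlgebra.ι_apply]
      rw [h2]; exact h v
  | mul x y hx hy => rw [map_mul]; exact hx.mul_right hy
  | add x y hx hy => rw [map_add]; exact hx.add_right hy

lemma ZE_commute (i : Fin 3) (u : UEA V) : Commute (ZE V i) u := by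
  refine commute_all V (fun v => ?_) u
  have h := (ιV V).map_lie (x := THV.z i) (y := v)
  rw [THV.lie_z, Ring.lie_def, map_zero] at h
  have h2 := sub_eq_zero.mp h.symm
  exact h2

lemma XI0_commute (u : UEA V) : Commute (XI V 0) u := by
  refine commute_all V (fun v => ?_) u
  have h : ⁅(THV.I 0 : V), v⁆ = 0 := by
    have hmap : (LieAlgebra.ad ℂ V (THV.I 0)) = 0 := by
      apply (THV.basis (V := V)).ext
      rintro (k | k | i) <;>
        simp only [LieAlgebra.ad_apply, LinearMap.zero_apply, THV.basis_L, THV.basis_I,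
          THV.basis_z]
      · have h2 := THV.lie_LI (V := V) k 0
        have h3 : ⁅(THV.I 0 : V), THV.L k⁆ = -⁅THV.L k, (THV.I 0 : V)⁆ := (lie_skew _ _).symm
        rw [h3, h2]
        rcases eq_or_ne k 0 with hk | hk
        · subst hk; norm_num
        · rw [if_neg (by omega)]
          norm_num
      · rw [THV.lie_II]
        rcases eq_or_ne k 0 with hk | hk
        · subst hk; norm_num
        · rw [if_neg (by omega)]
          norm_num
      · have h3 : ⁅(THV.I 0 : V), THV.z i⁆ = -⁅THV.z i, (THV.I 0 : V)⁆ := (lie_skew _ _).symm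
        rw [h3, THV.lie_z, neg_zero]
    have := congrArg (fun f => f v) hmap
    simpa [LieAlgebra.ad_apply] using this
  have h2 := (ιV V).map_lie (x := (THV.I 0 : V)) (y := v)
  rw [h, Ring.lie_def, map_zero] at h2
  have h3 := sub_eq_zero.mp h2.symm
  exact h3

lemma zElt_commute (i : Fin 4) (u : UEA V) : Commute (zElt V i) u := by
  fin_cases i
  · exact XI0_commute V u
  · exact ZE_commute V 0 u
  · exact ZE_commute V 1 u
  · exact ZE_commute V 2 u

end AuxDev

section AuxWords
open THV
variable (V : Type) [LieRing V] [LieAlgebra ℂ V] [THV V]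

set_option linter.unusedSectionVars false

/-- product over the reversed range. -/
noncomputable def prodRR (n : ℕ) (F : ℕ → UEA V) : UEA V :=
  (((List.range n).reverse).map F).prod

lemma prodRR_succ (n : ℕ) (F : ℕ → UEA V) :
    prodRR V (n + 1) F = F n * prodRR V n F := by
  simp [prodRR, List.range_succ]

lemma prodRR_congr {n : ℕ} {F G : ℕ → UEA V} (h : ∀ j, j < n → F j = G j) :
    prodRR V n F = prodRR V n G := by
  unfold prodRR
  congr 1
  apply List.map_congr_left
  intro a ha
  exact h a (by simpa using ha)

lemma prodRR_pad (F : ℕ → UEA V) (m n : ℕ) (h : m ≤ n) (h1 : ∀ j, m ≤ j → F j = 1) :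
    prodRR V n F = prodRR V m F := by
  induction n, h using Nat.le_induction with
  | base => rfl
  | succ n hmn ih => rw [prodRR_succ, h1 n hmn, one_mul, ih]

lemma prodRR_insert (a : UEA V) (k : ℕ) :
    ∀ (n : ℕ) (F : ℕ → UEA V), k < n → (∀ j, j ≠ k → Commute a (F j)) →
    a * prodRR V n F = prodRR V n (Function.update F k (a * F k)) := by
  intro n
  induction n with
  | zero => intro F h; omega
  | succ n ih =>
      intro F hk hc
      rw [prodRR_succ, prodRR_succ]
      rcases eq_or_ne n k with hnk | hnk
      · subst hnk
        rw [← mul_assoc, Function.update_self]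
        congr 1
        exact prodRR_congr V (fun j hj => (Function.update_of_ne (by omega) _ F).symm)
      · rw [← mul_assoc, (hc n hnk).eq, mul_assoc, ih F (by omega) hc,
          Function.update_of_ne hnk]

lemma Lword_def (f : ℕ →₀ ℕ) :
    Lword V f = prodRR V (f.support.sup id + 1) (fun k => XL V (-(k:ℤ)) ^ f k) := rfl

lemma Iword_def (f : ℕ →₀ ℕ) :
    Iword V f = prodRR V (f.support.sup id + 1) (fun k => XI V (-(k:ℤ)) ^ f k) := rfl

lemma apply_eq_zero_of_sup_lt {f : ℕ →₀ ℕ} {j : ℕ} (h : f.support.sup id < j) : f j = 0 := by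
  by_contra hj
  have : j ∈ f.support := Finsupp.mem_support_iff.mpr hj
  have := Finset.le_sup (f := id) this
  simp only [id] at this
  omega

lemma Lword_eq_prodRR {f : ℕ →₀ ℕ} {n : ℕ} (h : f.support.sup id < n) :
    Lword V f = prodRR V n (fun k => XL V (-(k:ℤ)) ^ f k) := by
  rw [Lword_def]
  exact (prodRR_pad V _ _ n h (fun j hj => by
    rw [apply_eq_zero_of_sup_lt (f := f) (by omega), pow_zero])).symm

lemma Iword_eq_prodRR {f : ℕ →₀ ℕ} {n : ℕ} (h : f.support.sup id < n) :
    Iword V f = prodRR V n (fun k => XI V (-(k:ℤ)) ^ f k) := by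
  rw [Iword_def]
  exact (prodRR_pad V _ _ n h (fun j hj => by
    rw [apply_eq_zero_of_sup_lt (f := f) (by omega), pow_zero])).symm

lemma Lword_zero : Lword V 0 = 1 := by
  rw [Lword_def]
  simp [prodRR, List.range_succ]

lemma Iword_zero : Iword V 0 = 1 := by
  rw [Iword_def]
  simp [prodRR, List.range_succ]

lemma mem_le_sup {f : ℕ →₀ ℕ} {j : ℕ} (h : j ∈ f.support) : j ≤ f.support.sup id := by
  simpa using Finset.le_sup (f := id) h

lemma mem_add_single_support {f : ℕ →₀ ℕ} {k n j : ℕ} (hj : j ∈ (f + Finsupp.single k n).support) :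
    j ∈ f.support ∨ j = k := by
  have hj2 : j ∈ f.support ∪ (Finsupp.single k n).support := Finsupp.support_add hj
  simp only [Finset.mem_union] at hj2
  rcases hj2 with hj2 | hj2
  · exact Or.inl hj2
  · have := Finsupp.support_single_subset hj2
    simp only [Finset.mem_singleton] at this
    exact Or.inr this

lemma sup_add_single_le {f : ℕ →₀ ℕ} {k : ℕ} (h : ∀ j ∈ f.support, j ≤ k) :
    (f + Finsupp.single k 1).support.sup id ≤ k := by
  apply Finset.sup_le
  intro j hj
  simp only [id_eq]
  rcases mem_add_single_support hj with hj2 | hj2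
  · exact h j hj2
  · omega

lemma sup_le_of_forall {f : ℕ →₀ ℕ} {k : ℕ} (h : ∀ j ∈ f.support, j ≤ k) :
    f.support.sup id ≤ k := by
  apply Finset.sup_le
  intro j hj
  simpa using h j hj

/-- Prepending `L_{-k}` to `L_{-λ}` when `k` dominates all parts of `λ`. -/
lemma Lword_prepend {f : ℕ →₀ ℕ} {k : ℕ} (h : ∀ j ∈ f.support, j ≤ k) :
    Lword V (f + Finsupp.single k 1) = XL V (-(k:ℤ)) * Lword V f := by
  rw [Lword_eq_prodRR V (n := k + 1) (by have := sup_add_single_le h; omega),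
      Lword_eq_prodRR V (n := k + 1) (by have := sup_le_of_forall h; omega),
      prodRR_succ, prodRR_succ, ← mul_assoc]
  have h1 : ((f + Finsupp.single k 1 : ℕ →₀ ℕ)) k = f k + 1 := by
    rw [Finsupp.add_apply, Finsupp.single_eq_same]
  have h2 : XL V (-(k:ℤ)) ^ ((f + Finsupp.single k 1 : ℕ →₀ ℕ)) k
      = XL V (-(k:ℤ)) * XL V (-(k:ℤ)) ^ f k := by
    rw [h1, pow_succ']
  rw [h2]
  congr 1
  apply prodRR_congr
  intro j hj
  have h3 : ((f + Finsupp.single k 1 : ℕ →₀ ℕ)) j = f j := by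
    rw [Finsupp.add_apply, Finsupp.single_apply, if_neg (by omega)]
    omega
  rw [h3]

lemma XI_commute_XI (a b : ℤ) (ha : a ≤ 0) (hb : b ≤ 0) (hab : a ≠ 0 ∨ b ≠ 0) :
    Commute (XI V a) (XI V b) := by
  have h := UII V a b
  rw [if_neg (by omega)] at h
  simpa [Commute, SemiconjBy] using h

/-- Inserting `I_{-k}` (k ≥ 1) into `I_{-μ}` anywhere. -/
lemma Iword_insert {f : ℕ →₀ ℕ} {k : ℕ} (hk : 1 ≤ k) :
    Iword V (f + Finsupp.single k 1) = XI V (-(k:ℤ)) * Iword V f := by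
  set n := max (f.support.sup id) k + 1 with hn
  have hsup : (f + Finsupp.single k 1).support.sup id < n := by
    have h2 : (f + Finsupp.single k 1).support.sup id ≤ max (f.support.sup id) k := by
      apply Finset.sup_le
      intro j hj
      simp only [id_eq]
      rcases mem_add_single_support hj with hj2 | hj2
      · exact le_trans (mem_le_sup hj2) (le_max_left _ _)
      · omega
    omega
  rw [Iword_eq_prodRR V (n := n) hsup,
      Iword_eq_prodRR V (n := n) (by omega),
      prodRR_insert V (XI V (-(k:ℤ))) k n (fun j => XI V (-(j:ℤ)) ^ f j) (by omega)
        (fun j hj => (XI_commute_XI V (-(k:ℤ)) (-(j:ℤ)) (by omega) (by omega)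
          (Or.inl (by omega))).pow_right _)]
  apply prodRR_congr
  intro j hj
  rcases eq_or_ne j k with rfl | hjk
  · rw [Function.update_self, Finsupp.add_apply, Finsupp.single_eq_same, pow_succ']
  · rw [Function.update_of_ne hjk, Finsupp.add_apply, Finsupp.single_apply,
      if_neg (by omega)]
    norm_num

end AuxWords

section AuxDeg
open THV
set_option linter.unusedSectionVars false
variable (V : Type) [LieRing V] [LieAlgebra ℂ V] [THV V]

/-- size of a pseudopartition: total number of parts. -/
def psz (f : ℕ →₀ ℕ) : ℕ := f.sum fun _ m => m

lemma pdeg_add (f g : ℕ →₀ ℕ) : pdeg (f + g) = pdeg f + pdeg g := by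
  unfold pdeg
  apply Finsupp.sum_add_index' <;> intros <;> ring

lemma psz_add (f g : ℕ →₀ ℕ) : psz (f + g) = psz f + psz g := by
  unfold psz
  apply Finsupp.sum_add_index' <;> intros <;> ring

lemma pdeg_single (k n : ℕ) : pdeg (Finsupp.single k n) = k * n := by
  unfold pdeg
  rw [Finsupp.sum_single_index]
  ring

lemma psz_single (k n : ℕ) : psz (Finsupp.single k n) = n := by
  unfold psz
  rw [Finsupp.sum_single_index]
  rfl

/-- decomposition of a nonzero pseudopartition at its largest part. -/
lemma extract_top {f : ℕ →₀ ℕ} (h : f ≠ 0) :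
    ∃ (s : ℕ) (g : ℕ →₀ ℕ), f = g + Finsupp.single s 1 ∧ (∀ j ∈ g.support, j ≤ s) ∧
      (∀ j ∈ f.support, j ≤ s) ∧ f s ≠ 0 ∧
      pdeg f = pdeg g + s ∧ psz f = psz g + 1 := by
  have hne : f.support.Nonempty := Finsupp.support_nonempty_iff.mpr h
  set s := f.support.sup id with hs
  have hmem : s ∈ f.support := by
    obtain ⟨b, hb, hbe⟩ := Finset.exists_mem_eq_sup f.support hne id
    rw [hs, hbe]; exact hb
  have hfs : f s ≠ 0 := Finsupp.mem_support_iff.mp hmem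
  refine ⟨s, f - Finsupp.single s 1, ?_, ?_, ?_, hfs, ?_, ?_⟩
  · ext j
    rcases eq_or_ne j s with rfl | hj
    · simp only [Finsupp.add_apply, Finsupp.tsub_apply, Finsupp.single_eq_same]
      omega
    · simp only [Finsupp.add_apply, Finsupp.tsub_apply, Finsupp.single_apply,
        if_neg (Ne.symm hj)]
      omega
  · intro j hj
    have : j ∈ f.support := by
      rw [Finsupp.mem_support_iff] at hj ⊢
      intro hfj
      apply hj
      simp [Finsupp.tsub_apply, hfj]
    exact mem_le_sup this
  · intro j hj
    exact mem_le_sup hj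
  all_goals {
    have hdec : f = (f - Finsupp.single s 1) + Finsupp.single s 1 := by
      ext j
      rcases eq_or_ne j s with rfl | hj
      · simp only [Finsupp.add_apply, Finsupp.tsub_apply, Finsupp.single_eq_same]
        omega
      · simp only [Finsupp.add_apply, Finsupp.tsub_apply, Finsupp.single_apply,
          if_neg (Ne.symm hj)]
        omega
    first
    | (conv_lhs => rw [hdec]
       rw [pdeg_add, pdeg_single]; ring)
    | (conv_lhs => rw [hdec]
       rw [psz_add, psz_single])
  }

lemma pdeg_zero : pdeg 0 = 0 := by simp [pdeg]
lemma psz_zero : psz 0 = 0 := by simp [psz]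

lemma psz_eq_zero {f : ℕ →₀ ℕ} (h : psz f = 0) : f = 0 := by
  by_contra hne
  obtain ⟨s, g, hdec, -, -, -, -, hsz⟩ := extract_top hne
  omega

end AuxDeg

section AuxM
open THV
set_option linter.unusedSectionVars false
variable (V : Type) [LieRing V] [LieAlgebra ℂ V] [THV V]

lemma zword_expand (t : Fin 4 → ℕ) :
    zword V t = zElt V 0 ^ t 0 * (zElt V 1 ^ t 1 * (zElt V 2 ^ t 2 * (zElt V 3 ^ t 3 * 1))) := by
  rfl

lemma zword_zero : zword V (fun _ => 0) = 1 := by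
  rw [zword_expand]; simp

lemma comm_shift (z A B : UEA V) (h : Commute z A) : A * (z * B) = z * (A * B) := by
  rw [← mul_assoc, ← h.eq, mul_assoc]

lemma zElt_mul_zword (i : Fin 4) (t : Fin 4 → ℕ) :
    ∃ t' : Fin 4 → ℕ, zElt V i * zword V t = zword V t' := by
  refine ⟨Function.update t i (t i + 1), ?_⟩
  have hc : ∀ (j : Fin 4) (u : UEA V), Commute (zElt V j) u := zElt_commute V
  fin_cases i <;>
    rw [zword_expand, zword_expand] <;>
    simp only [show (⟨0, by norm_num⟩ : Fin 4) = 0 from rfl,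
      show (⟨1, by norm_num⟩ : Fin 4) = 1 from rfl,
      show (⟨2, by norm_num⟩ : Fin 4) = 2 from rfl,
      show (⟨3, by norm_num⟩ : Fin 4) = 3 from rfl,
      Function.update_apply, Fin.reduceEq, if_false, if_true, reduceIte,
      Fin.isValue, mul_one]
  · rw [pow_succ', mul_assoc]
  · rw [pow_succ', mul_assoc, comm_shift V _ _ _ (hc 1 _)]
  · rw [pow_succ', mul_assoc, comm_shift V _ _ _ (hc 2 _), comm_shift V _ _ _ (hc 2 _)]
  · rw [pow_succ', comm_shift V _ _ _ (hc 3 _), comm_shift V _ _ _ (hc 3 _),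
      comm_shift V _ _ _ (hc 3 _)]

lemma zword_commute (t : Fin 4 → ℕ) (u : UEA V) : Commute (zword V t) u := by
  rw [zword_expand]
  exact ((zElt_commute V 0 u).pow_left _).mul_left
    (((zElt_commute V 1 u).pow_left _).mul_left
      (((zElt_commute V 2 u).pow_left _).mul_left
        (((zElt_commute V 3 u).pow_left _).mul_left (Commute.one_left u))))

variable (ψ : nPlus V →ₗ⁅ℂ⁆ ℂ)

/-- `mk : U(𝒱) → M_ψ`. -/
noncomputable def mkM : UEA V → Mpsi V ψ := Submodule.Quotient.mk

lemma mkM_smul (u v : UEA V) : mkM V ψ (u * v) = u • mkM V ψ v := by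
  unfold mkM
  rw [← Submodule.Quotient.mk_smul]
  rfl

lemma mkM_smulC (c : ℂ) (v : UEA V) : mkM V ψ (c • v) = c • mkM V ψ v := by
  unfold mkM
  rw [← Submodule.Quotient.mk_smul]

lemma mkM_add (u v : UEA V) : mkM V ψ (u + v) = mkM V ψ u + mkM V ψ v := rfl

lemma smul_mkM_eq (u : UEA V) (v : Mpsi V ψ) (w : UEA V) (h : v = mkM V ψ w) :
    u • v = mkM V ψ (u * w) := by rw [h, mkM_smul]

lemma mw_eq : mw V ψ = mkM V ψ 1 := rfl

end AuxM

section AuxKey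
open THV
set_option linter.unusedSectionVars false
set_option maxHeartbeats 1000000
variable (V : Type) [LieRing V] [LieAlgebra ℂ V] [THV V]

lemma mul_left_span {S : Set (UEA V)} {T : Submodule ℂ (UEA V)} (a : UEA V)
    (h : ∀ u ∈ S, a * u ∈ T) {v : UEA V} (hv : v ∈ Submodule.span ℂ S) : a * v ∈ T := by
  have hle : Submodule.span ℂ S ≤ T.comap (LinearMap.mulLeft ℂ a) :=
    Submodule.span_le.mpr (fun u hu => by
      simpa [Submodule.mem_comap, LinearMap.mulLeft_apply] using h u hu)
  simpa [Submodule.mem_comap, LinearMap.mulLeft_apply] using hle hv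

/-- Target set for straightening `L_{-k} · L_{-λ}`. -/
def SLset (d n : ℕ) (pure : ℕ →₀ ℕ) : Set (UEA V) :=
  {u | ∃ α : ℕ →₀ ℕ, u = Lword V α ∧ pdeg α ≤ d ∧ (psz α ≤ n ∨ α = pure)}

/-- Straightening a single `L_{-k}` into `L_{-λ}` (an identity in `U(𝒱)`). -/
lemma key_L : ∀ (N : ℕ) (lam : ℕ →₀ ℕ), psz lam ≤ N → ∀ k : ℕ,
    XL V (-(k:ℤ)) * Lword V lam ∈
      Submodule.span ℂ (SLset V (k + pdeg lam) (psz lam) (lam + Finsupp.single k 1)) := by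
  intro N
  induction N with
  | zero =>
      intro lam hN k
      have hl : lam = 0 := psz_eq_zero (by omega)
      subst hl
      rw [← Lword_prepend V (f := 0) (by simp)]
      exact Submodule.subset_span ⟨0 + Finsupp.single k 1, rfl,
        by rw [pdeg_add, pdeg_single, pdeg_zero]; omega, Or.inr rfl⟩
  | succ N ih =>
      intro lam hN k
      by_cases hk : ∀ j ∈ lam.support, j ≤ k
      · rw [← Lword_prepend V hk]
        exact Submodule.subset_span ⟨lam + Finsupp.single k 1, rfl,
          by rw [pdeg_add, pdeg_single]; omega, Or.inr rfl⟩
      · push_neg at hk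
        obtain ⟨j0, hj0mem, hj0⟩ := hk
        have hlamne : lam ≠ 0 := by
          intro h; rw [h] at hj0mem; simp at hj0mem
        obtain ⟨s, g, hdec, hg, hlamsup, hfs, hpdeg, hpsz⟩ := extract_top hlamne
        have hks : k < s := lt_of_lt_of_le hj0 (hlamsup j0 hj0mem)
        have hgN : psz g ≤ N := by omega
        have hlw : Lword V lam = XL V (-(s:ℤ)) * Lword V g := by
          conv_lhs => rw [hdec]
          rw [Lword_prepend V hg]
        have hcast : (-(k:ℤ)) + (-(s:ℤ)) = -((k+s : ℕ) : ℤ) := by push_cast; ring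
        have hmul := ULL V (-(k:ℤ)) (-(s:ℤ))
        rw [if_neg (by omega), zero_smul, add_zero, hcast] at hmul
        have hexp : XL V (-(k:ℤ)) * Lword V lam
            = XL V (-(s:ℤ)) * (XL V (-(k:ℤ)) * Lword V g)
              + ((↑(-(s:ℤ)) : ℂ) - (↑(-(k:ℤ)) : ℂ)) • (XL V (-((k+s:ℕ):ℤ)) * Lword V g) := by
          rw [hlw, ← mul_assoc, hmul]
          rw [add_mul, smul_mul_assoc, mul_assoc]
        rw [hexp]
        apply Submodule.add_mem
        · -- T1 : prepend X_{-s} to the straightening of X_{-k} L_g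
          refine mul_left_span V (XL V (-(s:ℤ))) ?_ (ih g hgN k)
          rintro u ⟨α, rfl, hαd, hαsz⟩
          rcases hαsz with hαsz | rfl
          · -- recurse
            have hrec := ih α (by omega) s
            refine Submodule.span_le.mpr ?_ hrec
            rintro u ⟨β, rfl, hβd, hβsz⟩
            refine Submodule.subset_span ⟨β, rfl, by omega, Or.inl ?_⟩
            rcases hβsz with h | h
            · omega
            · subst h; rw [psz_add, psz_single]; omega
          · -- pure term: direct prepend
            have hsup2 : ∀ j ∈ (g + Finsupp.single k 1).support, j ≤ s := by
              intro j hj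
              rcases mem_add_single_support hj with hj2 | rfl
              · exact hg j hj2
              · omega
            rw [← Lword_prepend V hsup2]
            refine Submodule.subset_span ⟨g + Finsupp.single k 1 + Finsupp.single s 1, rfl,
              ?_, Or.inr ?_⟩
            · rw [pdeg_add, pdeg_add, pdeg_single, pdeg_single]; omega
            · rw [add_right_comm, ← hdec]
        · -- T2 : the contracted term
          apply Submodule.smul_mem
          have hrec := ih g hgN (k + s)
          refine Submodule.span_le.mpr ?_ hrec
          rintro u ⟨β, rfl, hβd, hβsz⟩
          refine Submodule.subset_span ⟨β, rfl, by omega, Or.inl ?_⟩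
          rcases hβsz with h | h
          · omega
          · subst h; rw [psz_add, psz_single]; omega

end AuxKey

section AuxKeyI
open THV
set_option linter.unusedSectionVars false
set_option maxHeartbeats 1000000
variable (V : Type) [LieRing V] [LieAlgebra ℂ V] [THV V]

lemma mul_right_span {S : Set (UEA V)} {T : Submodule ℂ (UEA V)} (a : UEA V)
    (h : ∀ u ∈ S, u * a ∈ T) {v : UEA V} (hv : v ∈ Submodule.span ℂ S) : v * a ∈ T := by
  have hle : Submodule.span ℂ S ≤ T.comap (LinearMap.mulRight ℂ a) :=
    Submodule.span_le.mpr (fun u hu => by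
      simpa [Submodule.mem_comap, LinearMap.mulRight_apply] using h u hu)
  simpa [Submodule.mem_comap, LinearMap.mulRight_apply] using hle hv

/-- Target set for straightening `I_{-k} · L_{-λ}`. -/
def SIset (d n : ℕ) (purea : ℕ →₀ ℕ) (purek : ℕ) : Set (UEA V) :=
  {u | ∃ (α : ℕ →₀ ℕ) (j : ℕ), 1 ≤ j ∧ u = Lword V α * XI V (-(j:ℤ)) ∧ pdeg α + j ≤ d ∧
    (psz α < n ∨ (α = purea ∧ j = purek))}

/-- Straightening a single `I_{-k}` (k ≥ 1) past `L_{-λ}` (an identity in `U(𝒱)`). -/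
lemma key_I : ∀ (N : ℕ) (lam : ℕ →₀ ℕ), psz lam ≤ N → ∀ k : ℕ, 1 ≤ k →
    XI V (-(k:ℤ)) * Lword V lam ∈
      Submodule.span ℂ (SIset V (k + pdeg lam) (psz lam) lam k) := by
  intro N
  induction N with
  | zero =>
      intro lam hN k hk
      have hl : lam = 0 := psz_eq_zero (by omega)
      subst hl
      rw [Lword_zero, mul_one]
      refine Submodule.subset_span ⟨0, k, hk, by rw [Lword_zero, one_mul], by
        rw [pdeg_zero]; omega, Or.inr ⟨rfl, rfl⟩⟩
  | succ N ih =>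
      intro lam hN k hk
      rcases eq_or_ne lam 0 with rfl | hlamne
      · rw [Lword_zero, mul_one]
        refine Submodule.subset_span ⟨0, k, hk, by rw [Lword_zero, one_mul], by
          rw [pdeg_zero]; omega, Or.inr ⟨rfl, rfl⟩⟩
      · obtain ⟨s, g, hdec, hg, hlamsup, hfs, hpdeg, hpsz⟩ := extract_top hlamne
        have hgN : psz g ≤ N := by omega
        have hlw : Lword V lam = XL V (-(s:ℤ)) * Lword V g := by
          conv_lhs => rw [hdec]
          rw [Lword_prepend V hg]
        have hmul2 : XI V (-(k:ℤ)) * XL V (-(s:ℤ))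
            = XL V (-(s:ℤ)) * XI V (-(k:ℤ)) + ((k:ℕ) : ℂ) • XI V (-((k+s:ℕ):ℤ)) := by
          have h1 := ULI V (-(s:ℤ)) (-(k:ℤ))
          rw [if_neg (by omega), zero_smul, add_zero,
            (show (-(s:ℤ)) + (-(k:ℤ)) = -((k+s:ℕ):ℤ) by push_cast; ring)] at h1
          rw [eq_sub_of_add_eq h1.symm, sub_eq_add_neg, ← neg_smul]
          norm_num
        have hexp : XI V (-(k:ℤ)) * Lword V lam
            = XL V (-(s:ℤ)) * (XI V (-(k:ℤ)) * Lword V g)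
              + ((k:ℕ) : ℂ) • (XI V (-((k+s:ℕ):ℤ)) * Lword V g) := by
          rw [hlw, ← mul_assoc, hmul2, add_mul, smul_mul_assoc, mul_assoc]
        rw [hexp]
        apply Submodule.add_mem
        · refine mul_left_span V (XL V (-(s:ℤ))) ?_ (ih g hgN k hk)
          rintro u ⟨α, j, hj, rfl, hd, hsz⟩
          rcases hsz with hsz | ⟨h1, h2⟩
          · -- nonpure : straighten X_{-s} into Lword α, then multiply by XI on the right
            rw [← mul_assoc]
            refine mul_right_span V (XI V (-(j:ℤ))) ?_ (key_L V (psz α) α le_rfl s)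
            rintro u ⟨β, rfl, hβd, hβsz⟩
            refine Submodule.subset_span ⟨β, j, hj, rfl, by omega, Or.inl ?_⟩
            rcases hβsz with h | h
            · omega
            · subst h; rw [psz_add, psz_single]; omega
          · -- pure
            rw [h1, h2, ← mul_assoc, ← Lword_prepend V hg, ← hdec]
            exact Submodule.subset_span ⟨lam, k, hk, rfl, by omega, Or.inr ⟨rfl, rfl⟩⟩
        · apply Submodule.smul_mem
          have hrec := ih g hgN (k + s) (by omega)
          refine Submodule.span_le.mpr ?_ hrec
          rintro u ⟨α, j, hj, rfl, hd, hsz⟩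
          refine Submodule.subset_span ⟨α, j, hj, rfl, by omega, Or.inl ?_⟩
          rcases hsz with h | ⟨rfl, rfl⟩ <;> omega

end AuxKeyI

section AuxQuot
open THV
set_option linter.unusedSectionVars false
set_option maxHeartbeats 1000000
variable (V : Type) [LieRing V] [LieAlgebra ℂ V] [THV V] (ψ : nPlus V →ₗ⁅ℂ⁆ ℂ)

example (c : ℂ) (v : Mpsi V ψ) (a : UEA V) : a • (c • v) = c • (a • v) := by
  rw [← algebraMap_smul (UEA V) c v, ← mul_smul, ← Algebra.commutes, mul_smul,
    algebraMap_smul]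

/-- `mk` as a `ℂ`-linear map. -/
noncomputable def mkL : UEA V →ₗ[ℂ] Mpsi V ψ where
  toFun := mkM V ψ
  map_add' := mkM_add V ψ
  map_smul' := fun c v => mkM_smulC V ψ c v

/-- the action of `a : U(𝒱)` on `M_ψ` as a `ℂ`-linear map. -/
noncomputable def actE (a : UEA V) : Mpsi V ψ →ₗ[ℂ] Mpsi V ψ where
  toFun := fun v => a • v
  map_add' := smul_add a
  map_smul' := fun c v => by
    show a • (c • v) = c • (a • v)
    rw [← algebraMap_smul (UEA V) c v, ← mul_smul, ← Algebra.commutes,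
      mul_smul, algebraMap_smul]

lemma map_span_mem {R A B : Type} [CommRing R] [AddCommGroup A] [AddCommGroup B]
    [Module R A] [Module R B] {S : Set A} (f : A →ₗ[R] B) {T : Submodule R B}
    (h : ∀ u ∈ S, f u ∈ T) {v : A} (hv : v ∈ Submodule.span R S) : f v ∈ T := by
  have hle : Submodule.span R S ≤ T.comap f :=
    Submodule.span_le.mpr (fun u hu => by simpa [Submodule.mem_comap] using h u hu)
  simpa [Submodule.mem_comap] using hle hv

/-- The span of the standard basis vectors of degree at most `N`. -/
noncomputable def Fsp (N : ℤ) : Submodule ℂ (Mpsi V ψ) :=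
  Submodule.span ℂ {v | ∃ (t : Fin 4 → ℕ) (α ν : ℕ →₀ ℕ), ν 0 = 0 ∧
    (pdeg α : ℤ) + (pdeg ν : ℤ) ≤ N ∧ v = mkM V ψ (zword V t * (Lword V α * Iword V ν))}

lemma Fsp_mono {N N' : ℤ} (h : N ≤ N') : Fsp V ψ N ≤ Fsp V ψ N' :=
  Submodule.span_mono (fun v ⟨t, α, ν, h0, hd, hv⟩ => ⟨t, α, ν, h0, by omega, hv⟩)

lemma mem_Fsp {N : ℤ} (t : Fin 4 → ℕ) (α ν : ℕ →₀ ℕ) (h0 : ν 0 = 0)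
    (hd : (pdeg α : ℤ) + (pdeg ν : ℤ) ≤ N) :
    mkM V ψ (zword V t * (Lword V α * Iword V ν)) ∈ Fsp V ψ N :=
  Submodule.subset_span ⟨t, α, ν, h0, hd, rfl⟩

lemma mem_Fsp' {N : ℤ} (α ν : ℕ →₀ ℕ) (h0 : ν 0 = 0)
    (hd : (pdeg α : ℤ) + (pdeg ν : ℤ) ≤ N) :
    mkM V ψ (Lword V α * Iword V ν) ∈ Fsp V ψ N := by
  have := mem_Fsp V ψ (fun _ => 0) α ν h0 hd
  rwa [zword_zero, one_mul] at this

end AuxQuot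

section AuxAct
open THV
set_option linter.unusedSectionVars false
set_option maxHeartbeats 1000000
variable (V : Type) [LieRing V] [LieAlgebra ℂ V] [THV V] (ψ : nPlus V →ₗ⁅ℂ⁆ ℂ)

lemma act_L (s : ℕ) {N : ℤ} {v : Mpsi V ψ} (hv : v ∈ Fsp V ψ N) :
    XL V (-(s:ℤ)) • v ∈ Fsp V ψ (N + s) := by
  have := map_span_mem (actE V ψ (XL V (-(s:ℤ)))) (T := Fsp V ψ (N + s)) ?_ hv
  · exact this
  rintro u ⟨t, α, ν, h0, hd, rfl⟩
  show XL V (-(s:ℤ)) • mkM V ψ (zword V t * (Lword V α * Iword V ν)) ∈ _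
  rw [← mkM_smul,
    comm_shift V (zword V t) (XL V (-(s:ℤ))) (Lword V α * Iword V ν) (zword_commute V t _)]
  have hkey := key_L V (psz α) α le_rfl s
  have hf := map_span_mem ((mkL V ψ).comp ((LinearMap.mulLeft ℂ (zword V t)).comp
      (LinearMap.mulRight ℂ (Iword V ν)))) (T := Fsp V ψ (N + s)) ?_ hkey
  · simpa [mkL, LinearMap.comp_apply, mul_assoc] using hf
  rintro u ⟨β, rfl, hβd, -⟩
  show mkM V ψ (zword V t * (Lword V β * Iword V ν)) ∈ _
  exact mem_Fsp V ψ t β ν h0 (by push_cast; omega)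

lemma act_I (i : ℕ) (hi : 1 ≤ i) {N : ℤ} {v : Mpsi V ψ} (hv : v ∈ Fsp V ψ N) :
    XI V (-(i:ℤ)) • v ∈ Fsp V ψ (N + i) := by
  have := map_span_mem (actE V ψ (XI V (-(i:ℤ)))) (T := Fsp V ψ (N + i)) ?_ hv
  · exact this
  rintro u ⟨t, α, ν, h0, hd, rfl⟩
  show XI V (-(i:ℤ)) • mkM V ψ (zword V t * (Lword V α * Iword V ν)) ∈ _
  rw [← mkM_smul,
    comm_shift V (zword V t) (XI V (-(i:ℤ))) (Lword V α * Iword V ν) (zword_commute V t _)]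
  have hkey := key_I V (psz α) α le_rfl i hi
  have hf := map_span_mem ((mkL V ψ).comp ((LinearMap.mulLeft ℂ (zword V t)).comp
      (LinearMap.mulRight ℂ (Iword V ν)))) (T := Fsp V ψ (N + i)) ?_ hkey
  · simpa [mkL, LinearMap.comp_apply, mul_assoc] using hf
  rintro u ⟨β, j, hj, rfl, hβd, -⟩
  show mkM V ψ (zword V t * (Lword V β * XI V (-(j:ℤ)) * Iword V ν)) ∈ _
  rw [mul_assoc (Lword V β), ← Iword_insert V hj]
  have h0' : ((ν + Finsupp.single j 1 : ℕ →₀ ℕ)) 0 = 0 := by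
    rw [Finsupp.add_apply, Finsupp.single_apply, if_neg (by omega)]
    omega
  have hd' : (pdeg β : ℤ) + (pdeg (ν + Finsupp.single j 1) : ℤ) ≤ N + i := by
    rw [pdeg_add, pdeg_single]
    push_cast
    omega
  exact mem_Fsp V ψ t β _ h0' hd'

lemma mkM_mul_XL (u : UEA V) (j : ℤ) (hj : 1 ≤ j) :
    mkM V ψ (u * XL V j) = ψ ⟨THV.L j, L_mem_nPlus V hj⟩ • mkM V ψ u := by
  set c : ℂ := ψ ⟨THV.L j, L_mem_nPlus V hj⟩ with hc
  have hmem : XL V j - algebraMap ℂ (UEA V) c ∈ whittakerIdeal V ψ :=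
    Submodule.subset_span ⟨⟨THV.L j, L_mem_nPlus V hj⟩, rfl⟩
  have h2 : u * XL V j - u * algebraMap ℂ (UEA V) c ∈ whittakerIdeal V ψ := by
    rw [← mul_sub]
    exact Submodule.smul_mem _ u hmem
  have h3 : mkM V ψ (u * XL V j) = mkM V ψ (u * algebraMap ℂ (UEA V) c) :=
    (Submodule.Quotient.eq _).mpr h2
  rw [h3, ← Algebra.commutes, ← Algebra.smul_def, mkM_smulC]

lemma mkM_mul_XI (u : UEA V) (j : ℤ) (hj : 1 ≤ j) :
    mkM V ψ (u * XI V j) = ψ ⟨THV.I j, I_mem_nPlus V hj⟩ • mkM V ψ u := by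
  set c : ℂ := ψ ⟨THV.I j, I_mem_nPlus V hj⟩ with hc
  have hmem : XI V j - algebraMap ℂ (UEA V) c ∈ whittakerIdeal V ψ :=
    Submodule.subset_span ⟨⟨THV.I j, I_mem_nPlus V hj⟩, rfl⟩
  have h2 : u * XI V j - u * algebraMap ℂ (UEA V) c ∈ whittakerIdeal V ψ := by
    rw [← mul_sub]
    exact Submodule.smul_mem _ u hmem
  have h3 : mkM V ψ (u * XI V j) = mkM V ψ (u * algebraMap ℂ (UEA V) c) :=
    (Submodule.Quotient.eq _).mpr h2
  rw [h3, ← Algebra.commutes, ← Algebra.smul_def, mkM_smulC]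

lemma psi_lie_zero (x y : nPlus V) : ψ ⁅x, y⁆ = 0 := by
  rw [LieHom.map_lie, Ring.lie_def, mul_comm, sub_self]

lemma psiL_vanish (j : ℤ) (h3 : 3 ≤ j) (hj : 1 ≤ j) :
    ψ ⟨THV.L j, L_mem_nPlus V hj⟩ = 0 := by
  set x : nPlus V := ⟨THV.L 1, L_mem_nPlus V le_rfl⟩
  set y : nPlus V := ⟨THV.L (j - 1), L_mem_nPlus V (by omega)⟩
  have hb : ⁅x, y⁆ = ((j : ℂ) - 2) • (⟨THV.L j, L_mem_nPlus V hj⟩ : nPlus V) := by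
    apply Subtype.ext
    show ⁅(x : V), (y : V)⁆ = ((j : ℂ) - 2) • (THV.L j)
    rw [THV.lie_LL, if_neg (by omega), zero_smul, add_zero,
      show (1 : ℤ) + (j - 1) = j by ring]
    congr 1
    push_cast
    ring
  have h0 := psi_lie_zero V ψ x y
  rw [hb, map_smul, smul_eq_mul] at h0
  have hne : (j : ℂ) - 2 ≠ 0 := by
    intro h
    have : (j : ℂ) = 2 := by linear_combination h
    have : j = 2 := by exact_mod_cast this
    omega
  exact (mul_eq_zero.mp h0).resolve_left hne

lemma psiI_vanish (j : ℤ) (h2 : 2 ≤ j) (hj : 1 ≤ j) :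
    ψ ⟨THV.I j, I_mem_nPlus V hj⟩ = 0 := by
  set x : nPlus V := ⟨THV.L 1, L_mem_nPlus V le_rfl⟩
  set y : nPlus V := ⟨THV.I (j - 1), I_mem_nPlus V (by omega)⟩
  have hb : ⁅x, y⁆ = ((j : ℂ) - 1) • (⟨THV.I j, I_mem_nPlus V hj⟩ : nPlus V) := by
    apply Subtype.ext
    show ⁅(x : V), (y : V)⁆ = ((j : ℂ) - 1) • (THV.I j)
    rw [THV.lie_LI, if_neg (by omega), zero_smul, add_zero,
      show (1 : ℤ) + (j - 1) = j by ring]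
    congr 1
    push_cast
    ring
  have h0 := psi_lie_zero V ψ x y
  rw [hb, map_smul, smul_eq_mul] at h0
  have hne : (j : ℂ) - 1 ≠ 0 := by
    intro h
    have : (j : ℂ) = 1 := by linear_combination h
    have : j = 1 := by exact_mod_cast this
    omega
  exact (mul_eq_zero.mp h0).resolve_left hne

lemma maxdeg_le_of_mem_Fsp (B : Module.Basis WIdx ℂ (Mpsi V ψ)) (hB : IsStdBasis V ψ B)
    {v : Mpsi V ψ} {N : ℤ} (hv : v ∈ Fsp V ψ N) : maxdeg V ψ B v ≤ (N : WithBot ℤ) := by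
  have hsup : ∀ p ∈ (B.repr v).support, ((pdeg p.2.1 : ℤ) + (pdeg p.2.2.1 : ℤ)) ≤ N := by
    induction hv using Submodule.span_induction with
    | mem u hu =>
        obtain ⟨t, α, ν, h0, hd, rfl⟩ := hu
        have hbasis : mkM V ψ (zword V t * (Lword V α * Iword V ν)) = B (t, α, ⟨ν, h0⟩) := by
          rw [hB t α ⟨ν, h0⟩]
          rw [smul_mkM_eq V ψ _ _ 1 (mw_eq V ψ), mul_one, mul_assoc]
        rw [hbasis, B.repr_self]
        intro p hp
        have := Finsupp.support_single_subset hp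
        simp only [Finset.mem_singleton] at this
        subst this
        exact hd
    | zero =>
        intro p hp
        rw [LinearEquiv.map_zero] at hp
        simp at hp
    | add u w hu hw ihu ihw =>
        intro p hp
        rw [LinearEquiv.map_add] at hp
        rcases Finset.mem_union.mp (Finsupp.support_add hp) with h | h
        · exact ihu p h
        · exact ihw p h
    | smul c u hu ihu =>
        intro p hp
        rw [LinearEquiv.map_smul] at hp
        exact ihu p (Finsupp.support_smul hp)
  unfold maxdeg
  apply Finset.max_le
  intro a ha
  rw [Finset.mem_image] at ha
  obtain ⟨p, hp, rfl⟩ := ha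
  exact_mod_cast WithBot.coe_le_coe.mpr (hsup p hp)

end AuxAct

section AuxPI
open THV
set_option linter.unusedSectionVars false
set_option maxHeartbeats 1000000
variable (V : Type) [LieRing V] [LieAlgebra ℂ V] [THV V] (ψ : nPlus V →ₗ⁅ℂ⁆ ℂ)

lemma mkM_sub (u v : UEA V) : mkM V ψ (u - v) = mkM V ψ u - mkM V ψ v :=
  map_sub ((whittakerIdeal V ψ).mkQ) u v

lemma rearr (x y W C Z : UEA V) (c cz : ℂ) (h : y * x = x * y + c • C + cz • Z) :
    x * (y * W) = y * (x * W) - c • (C * W) - cz • (Z * W) := by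
  have h2 : x * y = y * x - c • C - cz • Z := by rw [h]; abel
  rw [← mul_assoc, h2, sub_mul, sub_mul, smul_mul_assoc, smul_mul_assoc, mul_assoc]

lemma rearrL (x y W C Z : UEA V) (c cz : ℂ) (h : x * y = y * x + c • C + cz • Z) :
    x * (y * W) = y * (x * W) + c • (C * W) + cz • (Z * W) := by
  rw [← mul_assoc, h, add_mul, add_mul, smul_mul_assoc, smul_mul_assoc, mul_assoc]

lemma zElt0_eq : zElt V 0 = XI V 0 := rfl
lemma zElt1_eq : zElt V 1 = ZE V 0 := rfl
lemma zElt2_eq : zElt V 2 = ZE V 1 := rfl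
lemma zElt3_eq : zElt V 3 = ZE V 2 := rfl

lemma mem_Fsp_z (k : Fin 4) (α ν : ℕ →₀ ℕ) (h0 : ν 0 = 0) {N : ℤ}
    (hd : (pdeg α : ℤ) + (pdeg ν : ℤ) ≤ N) :
    mkM V ψ (zElt V k * (Lword V α * Iword V ν)) ∈ Fsp V ψ N := by
  obtain ⟨t', ht'⟩ := zElt_mul_zword V k (fun _ => 0)
  rw [zword_zero, mul_one] at ht'
  rw [ht']
  exact mem_Fsp V ψ t' α ν h0 hd

lemma mem_Fsp_keyL (d : ℕ) (g ν : ℕ →₀ ℕ) (h0 : ν 0 = 0) {N : ℤ}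
    (hd : (d : ℤ) + (pdeg g : ℤ) + (pdeg ν : ℤ) ≤ N) :
    mkM V ψ (XL V (-(d:ℤ)) * (Lword V g * Iword V ν)) ∈ Fsp V ψ N := by
  rw [← mul_assoc]
  refine map_span_mem ((mkL V ψ).comp (LinearMap.mulRight ℂ (Iword V ν)))
    (T := Fsp V ψ N) ?_ (key_L V (psz g) g le_rfl d)
  rintro u ⟨β, rfl, hβd, -⟩
  show mkM V ψ (Lword V β * Iword V ν) ∈ _
  exact mem_Fsp' V ψ β ν h0 (by push_cast; omega)

lemma mem_Fsp_keyI (d : ℕ) (hd1 : 1 ≤ d) (g ν : ℕ →₀ ℕ) (h0 : ν 0 = 0) {N : ℤ}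
    (hd : (d : ℤ) + (pdeg g : ℤ) + (pdeg ν : ℤ) ≤ N) :
    mkM V ψ (XI V (-(d:ℤ)) * (Lword V g * Iword V ν)) ∈ Fsp V ψ N := by
  rw [← mul_assoc]
  refine map_span_mem ((mkL V ψ).comp (LinearMap.mulRight ℂ (Iword V ν)))
    (T := Fsp V ψ N) ?_ (key_I V (psz g) g le_rfl d hd1)
  rintro u ⟨β, j, hj, rfl, hβd, -⟩
  show mkM V ψ (Lword V β * XI V (-(j:ℤ)) * Iword V ν) ∈ _
  rw [mul_assoc, ← Iword_insert V hj]
  have h0' : ((ν + Finsupp.single j 1 : ℕ →₀ ℕ)) 0 = 0 := by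
    rw [Finsupp.add_apply, Finsupp.single_apply, if_neg (by omega)]
    omega
  refine mem_Fsp' V ψ β _ h0' ?_
  rw [pdeg_add, pdeg_single]
  push_cast
  omega

lemma mkM_one_mem : mkM V ψ 1 ∈ Fsp V ψ 0 := by
  have h1 : (zword V (fun _ => 0) * (Lword V 0 * Iword V 0)) = (1 : UEA V) := by
    rw [zword_zero, Lword_zero, Iword_zero]; norm_num
  rw [← h1]
  exact mem_Fsp V ψ _ 0 0 rfl (by rw [pdeg_zero]; omega)

/-- Action of a positive `I`-mode on a standard monomial vector. -/
theorem posI : ∀ (n : ℕ) (lam mu : ℕ →₀ ℕ), mu 0 = 0 → psz lam + psz mu ≤ n →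
    ∀ j : ℤ, 1 ≤ j →
    mkM V ψ (XI V j * (Lword V lam * Iword V mu)) ∈
      Fsp V ψ ((pdeg lam : ℤ) + (pdeg mu : ℤ) + 1 - j) := by
  intro n
  induction n with
  | zero =>
      intro lam mu h0 hn j hj
      have hl : lam = 0 := psz_eq_zero (by omega)
      have hm : mu = 0 := psz_eq_zero (by omega)
      subst hl; subst hm
      rw [Lword_zero, Iword_zero, show XI V j * ((1:UEA V) * 1) = 1 * XI V j by simp,
        mkM_mul_XI V ψ 1 j hj]
      rcases eq_or_ne j 1 with rfl | hj2
      · refine Submodule.smul_mem _ _ (Fsp_mono V ψ (by rw [pdeg_zero]; omega)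
          (mkM_one_mem V ψ))
      · rw [psiI_vanish V ψ j (by omega) hj, zero_smul]
        exact Submodule.zero_mem _
  | succ n ih =>
      intro lam mu h0 hn j hj
      by_cases hsz : psz lam + psz mu ≤ n
      · exact ih lam mu h0 hsz j hj
      rcases eq_or_ne lam 0 with rfl | hlamne
      · -- head meets the I-word
        have hmune : mu ≠ 0 := by
          intro h; rw [h] at hsz; simp [psz_zero] at hsz
        obtain ⟨i, g, hdec, hg, hmusup, hfs, hpdeg, hpsz⟩ := extract_top hmune
        have hi1 : 1 ≤ i := by
          rcases Nat.eq_zero_or_pos i with hi0 | hi0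
          · exfalso; rw [hi0] at hfs; exact hfs h0
          · omega
        have hg0 : g 0 = 0 := by
          have h2 := congrArg (fun f => f 0) hdec
          simp only [Finsupp.add_apply, Finsupp.single_apply,
            if_neg (by omega : ¬ i = 0)] at h2
          omega
        have hIw : Iword V mu = XI V (-(i:ℤ)) * Iword V g := by
          conv_lhs => rw [hdec]
          rw [Iword_insert V hi1]
        rw [Lword_zero, one_mul, hIw]
        rw [rearrL V (XI V j) (XI V (-(i:ℤ))) (Iword V g) 1 (ZE V 2) 0
          (if -(i:ℤ) = -j then (j:ℂ) else 0) (by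
            rw [zero_smul, add_zero]; exact UII V j (-(i:ℤ)))]
        rw [mkM_add, mkM_add, mkM_smulC, mkM_smulC, mkM_smul, zero_smul, add_zero]
        apply Submodule.add_mem
        · -- T1
          have hT := ih 0 g hg0 (by omega) j hj
          rw [Lword_zero, one_mul] at hT
          have hT2 := act_I V ψ i hi1 hT
          refine Fsp_mono V ψ ?_ hT2
          rw [pdeg_zero]
          push_cast
          omega
        · -- T2 : central term
          rcases eq_or_ne (-(i:ℤ)) (-j) with hc | hc
          · rw [if_pos hc]
            apply Submodule.smul_mem
            have hT := mem_Fsp_z V ψ 3 0 g hg0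
              (N := (pdeg 0 : ℤ) + (pdeg mu : ℤ) + 1 - j) (by
                rw [pdeg_zero]
                push_cast
                omega)
            rw [zElt3_eq, Lword_zero, one_mul] at hT
            exact hT
          · rw [if_neg hc, zero_smul]
            exact Submodule.zero_mem _
      · -- head meets the L-word
        obtain ⟨s, g, hdec, hg, hlamsup, hfs, hpdeg, hpsz⟩ := extract_top hlamne
        have hlw : Lword V lam = XL V (-(s:ℤ)) * Lword V g := by
          conv_lhs => rw [hdec]
          rw [Lword_prepend V hg]
        rw [hlw, mul_assoc]
        rw [rearr V (XI V j) (XL V (-(s:ℤ))) (Lword V g * Iword V mu)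
          (XI V (-(s:ℤ) + j)) (ZE V 1) ((j : ℤ) : ℂ)
          (if j = -(-(s:ℤ)) then ((-(s:ℤ) : ℤ) : ℂ)^2 - ((-(s:ℤ) : ℤ) : ℂ) else 0)
          (ULI V (-(s:ℤ)) j)]
        rw [mkM_sub, mkM_sub, mkM_smulC, mkM_smulC, mkM_smul]
        apply Submodule.sub_mem
        apply Submodule.sub_mem
        · -- T1
          have hT := ih g mu h0 (by omega) j hj
          have hT2 := act_L V ψ s hT
          refine Fsp_mono V ψ ?_ hT2
          push_cast
          omega
        · -- T2
          apply Submodule.smul_mem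
          rcases lt_trichotomy (-(s:ℤ) + j) 1 with hlt | heq | hgt
          · rcases eq_or_ne (-(s:ℤ) + j) 0 with h00 | hne0
            · rw [h00, ← zElt0_eq]
              refine Fsp_mono V ψ ?_ (mem_Fsp_z V ψ 0 g mu h0
                (N := (pdeg g : ℤ) + (pdeg mu : ℤ)) (by omega))
              push_cast
              omega
            · set d : ℕ := (-(-(s:ℤ) + j)).toNat with hdd
              have hd : -(s:ℤ) + j = -(d:ℤ) := by omega
              rw [hd]
              exact mem_Fsp_keyI V ψ d (by omega) g mu h0 (by push_cast; omega)
          · rw [show -(s:ℤ) + j = 1 from heq]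
            have hT := ih g mu h0 (by omega) 1 le_rfl
            refine Fsp_mono V ψ ?_ hT
            push_cast
            omega
          · have hT := ih g mu h0 (by omega) (-(s:ℤ) + j) (by omega)
            refine Fsp_mono V ψ ?_ hT
            push_cast
            omega
        · -- T3 : central term
          rcases eq_or_ne j (-(-(s:ℤ))) with hc | hc
          · rw [if_pos hc]
            apply Submodule.smul_mem
            have hT := mem_Fsp_z V ψ 2 g mu h0
              (N := (pdeg lam : ℤ) + (pdeg mu : ℤ) + 1 - j) (by push_cast; omega)
            rw [zElt2_eq] at hT
            exact hT
          · rw [if_neg hc, zero_smul]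
            exact Submodule.zero_mem _

end AuxPI

section AuxPL
open THV
set_option linter.unusedSectionVars false
set_option maxHeartbeats 1000000
variable (V : Type) [LieRing V] [LieAlgebra ℂ V] [THV V] (ψ : nPlus V →ₗ⁅ℂ⁆ ℂ)

/-- Action of a positive `L`-mode on a standard monomial vector. -/
theorem posL : ∀ (n : ℕ) (lam mu : ℕ →₀ ℕ), mu 0 = 0 → psz lam + psz mu ≤ n →
    ∀ j : ℤ, 1 ≤ j →
    mkM V ψ (XL V j * (Lword V lam * Iword V mu)) ∈
      Fsp V ψ ((pdeg lam : ℤ) + (pdeg mu : ℤ) + 2 - j) := by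
  intro n
  induction n with
  | zero =>
      intro lam mu h0 hn j hj
      have hl : lam = 0 := psz_eq_zero (by omega)
      have hm : mu = 0 := psz_eq_zero (by omega)
      subst hl; subst hm
      rw [Lword_zero, Iword_zero, show XL V j * ((1:UEA V) * 1) = 1 * XL V j by simp,
        mkM_mul_XL V ψ 1 j hj]
      rcases lt_or_ge j 3 with hj2 | hj3
      · refine Submodule.smul_mem _ _ (Fsp_mono V ψ (by rw [pdeg_zero]; push_cast; omega)
          (mkM_one_mem V ψ))
      · rw [psiL_vanish V ψ j (by omega) hj, zero_smul]
        exact Submodule.zero_mem _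
  | succ n ih =>
      intro lam mu h0 hn j hj
      by_cases hsz : psz lam + psz mu ≤ n
      · exact ih lam mu h0 hsz j hj
      rcases eq_or_ne lam 0 with rfl | hlamne
      · -- head meets the I-word
        have hmune : mu ≠ 0 := by
          intro h; rw [h] at hsz; simp [psz_zero] at hsz
        obtain ⟨i, g, hdec, hg, hmusup, hfs, hpdeg, hpsz⟩ := extract_top hmune
        have hi1 : 1 ≤ i := by
          rcases Nat.eq_zero_or_pos i with hi0 | hi0
          · exfalso; rw [hi0] at hfs; exact hfs h0
          · omega
        have hg0 : g 0 = 0 := by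
          have h2 := congrArg (fun f => f 0) hdec
          simp only [Finsupp.add_apply, Finsupp.single_apply,
            if_neg (by omega : ¬ i = 0)] at h2
          omega
        have hIw : Iword V mu = XI V (-(i:ℤ)) * Iword V g := by
          conv_lhs => rw [hdec]
          rw [Iword_insert V hi1]
        rw [Lword_zero, one_mul, hIw]
        rw [rearrL V (XL V j) (XI V (-(i:ℤ))) (Iword V g) (XI V (j + -(i:ℤ))) (ZE V 1)
          ((-(i:ℤ) : ℤ) : ℂ)
          (if -(i:ℤ) = -j then ((j : ℤ) : ℂ)^2 - ((j : ℤ) : ℂ) else 0)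
          (ULI V j (-(i:ℤ)))]
        rw [mkM_add, mkM_add, mkM_smulC, mkM_smulC, mkM_smul]
        apply Submodule.add_mem
        apply Submodule.add_mem
        · -- T1
          have hT := ih 0 g hg0 (by omega) j hj
          rw [Lword_zero, one_mul] at hT
          have hT2 := act_I V ψ i hi1 hT
          refine Fsp_mono V ψ ?_ hT2
          rw [pdeg_zero]
          push_cast
          omega
        · -- T2
          apply Submodule.smul_mem
          rcases lt_trichotomy (j + -(i:ℤ)) 1 with hlt | heq | hgt
          · rcases eq_or_ne (j + -(i:ℤ)) 0 with h00 | hne0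
            · rw [h00, ← zElt0_eq]
              have hT := mem_Fsp_z V ψ 0 0 g hg0
                (N := (pdeg 0 : ℤ) + (pdeg mu : ℤ) + 2 - j) (by
                  rw [pdeg_zero]; push_cast; omega)
              rw [Lword_zero, one_mul] at hT
              exact hT
            · set d : ℕ := (-(j + -(i:ℤ))).toNat with hdd
              have hd : j + -(i:ℤ) = -(d:ℤ) := by omega
              rw [hd]
              have hT := mem_Fsp_keyI V ψ d (by omega) 0 g hg0
                (N := (pdeg 0 : ℤ) + (pdeg mu : ℤ) + 2 - j) (by
                  rw [pdeg_zero]; push_cast; omega)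
              rw [Lword_zero, one_mul] at hT
              exact hT
          · rw [show j + -(i:ℤ) = 1 from heq]
            have hT := posI V ψ (psz g) 0 g hg0 (by rw [psz_zero]; omega) 1 le_rfl
            rw [Lword_zero, one_mul] at hT
            refine Fsp_mono V ψ ?_ hT
            rw [pdeg_zero]
            push_cast
            omega
          · have hT := posI V ψ (psz g) 0 g hg0 (by rw [psz_zero]; omega)
              (j + -(i:ℤ)) (by omega)
            rw [Lword_zero, one_mul] at hT
            refine Fsp_mono V ψ ?_ hT
            rw [pdeg_zero]
            push_cast
            omega
        · -- T3 central
          rcases eq_or_ne (-(i:ℤ)) (-j) with hc | hc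
          · rw [if_pos hc]
            apply Submodule.smul_mem
            have hT := mem_Fsp_z V ψ 2 0 g hg0
              (N := (pdeg 0 : ℤ) + (pdeg mu : ℤ) + 2 - j) (by
                rw [pdeg_zero]; push_cast; omega)
            rw [zElt2_eq, Lword_zero, one_mul] at hT
            exact hT
          · rw [if_neg hc, zero_smul]
            exact Submodule.zero_mem _
      · -- head meets the L-word
        obtain ⟨s, g, hdec, hg, hlamsup, hfs, hpdeg, hpsz⟩ := extract_top hlamne
        have hlw : Lword V lam = XL V (-(s:ℤ)) * Lword V g := by
          conv_lhs => rw [hdec]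
          rw [Lword_prepend V hg]
        rw [hlw, mul_assoc]
        rw [rearr V (XL V j) (XL V (-(s:ℤ))) (Lword V g * Iword V mu)
          (XL V (-(s:ℤ) + j)) (ZE V 0) (((j : ℤ) : ℂ) - ((-(s:ℤ) : ℤ) : ℂ))
          (if j = -(-(s:ℤ)) then (((-(s:ℤ) : ℤ) : ℂ)^3 - ((-(s:ℤ) : ℤ) : ℂ))/12 else 0)
          (ULL V (-(s:ℤ)) j)]
        rw [mkM_sub, mkM_sub, mkM_smulC, mkM_smulC, mkM_smul]
        apply Submodule.sub_mem
        apply Submodule.sub_mem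
        · -- T1
          have hT := ih g mu h0 (by omega) j hj
          have hT2 := act_L V ψ s hT
          refine Fsp_mono V ψ ?_ hT2
          push_cast
          omega
        · -- T2
          apply Submodule.smul_mem
          rcases lt_trichotomy (-(s:ℤ) + j) 1 with hlt | heq | hgt
          · set d : ℕ := (-(-(s:ℤ) + j)).toNat with hdd
            have hd : -(s:ℤ) + j = -(d:ℤ) := by omega
            rw [hd]
            exact mem_Fsp_keyL V ψ d g mu h0 (by push_cast; omega)
          · rw [show -(s:ℤ) + j = 1 from heq]
            have hT := ih g mu h0 (by omega) 1 le_rfl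
            refine Fsp_mono V ψ ?_ hT
            push_cast
            omega
          · have hT := ih g mu h0 (by omega) (-(s:ℤ) + j) (by omega)
            refine Fsp_mono V ψ ?_ hT
            push_cast
            omega
        · -- T3 central
          rcases eq_or_ne j (-(-(s:ℤ))) with hc | hc
          · rw [if_pos hc]
            apply Submodule.smul_mem
            have hT := mem_Fsp_z V ψ 1 g mu h0
              (N := (pdeg lam : ℤ) + (pdeg mu : ℤ) + 2 - j) (by push_cast; omega)
            rw [zElt1_eq] at hT
            exact hT
          · rw [if_neg hc, zero_smul]
            exact Submodule.zero_mem _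

end AuxPL

section AuxEig
open THV
set_option linter.unusedSectionVars false
set_option maxHeartbeats 1000000
variable (V : Type) [LieRing V] [LieAlgebra ℂ V] [THV V]

/-- `u` is an `ad L₀`-eigenvector with eigenvalue `c`. -/
def Eig (c : ℂ) (u : UEA V) : Prop := XL V 0 * u = u * XL V 0 + c • u

lemma eig_one : Eig V 0 1 := by simp [Eig]

lemma eig_mul {c d : ℂ} {u v : UEA V} (hu : Eig V c u) (hv : Eig V d v) :
    Eig V (c + d) (u * v) := by
  unfold Eig at *
  rw [← mul_assoc, hu, add_mul, mul_assoc, hv, smul_mul_assoc]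
  rw [mul_add, mul_smul_comm, ← mul_assoc, add_smul]
  abel

lemma eig_pow {c : ℂ} {u : UEA V} (hu : Eig V c u) (n : ℕ) : Eig V ((n : ℂ) * c) (u ^ n) := by
  induction n with
  | zero => simpa using eig_one V
  | succ n ih =>
      have h2 := eig_mul V hu ih
      rw [← pow_succ'] at h2
      have h3 : ((n+1 : ℕ) : ℂ) * c = c + (n:ℂ) * c := by push_cast; ring
      rw [h3]
      exact h2

lemma eig_XLneg (k : ℕ) : Eig V ((-(k:ℤ) : ℤ) : ℂ) (XL V (-(k:ℤ))) := by
  unfold Eig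
  rcases Nat.eq_zero_or_pos k with rfl | hk
  · norm_num
  · have h := ULL V 0 (-(k:ℤ))
    rw [zero_add, if_neg (by omega), zero_smul, add_zero] at h
    rw [h]
    norm_num

lemma eig_XIneg (k : ℕ) : Eig V ((-(k:ℤ) : ℤ) : ℂ) (XI V (-(k:ℤ))) := by
  unfold Eig
  rcases Nat.eq_zero_or_pos k with rfl | hk
  · have h := ULI V 0 0
    norm_num at h ⊢
    exact h
  · have h := ULI V 0 (-(k:ℤ))
    rw [zero_add, if_neg (by omega), zero_smul, add_zero] at h
    rw [h]

lemma eig_prodRR (n : ℕ) (F : ℕ → UEA V) (cf : ℕ → ℂ) (h : ∀ j, j < n → Eig V (cf j) (F j)) :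
    Eig V (∑ j ∈ Finset.range n, cf j) (prodRR V n F) := by
  induction n with
  | zero => simpa [prodRR] using eig_one V
  | succ n ih =>
      rw [prodRR_succ, Finset.sum_range_succ, add_comm]
      exact eig_mul V (h n (by omega)) (ih (fun j hj => h j (by omega)))

lemma pdeg_eq_sum_range (f : ℕ →₀ ℕ) (n : ℕ) (hn : f.support.sup id < n) :
    pdeg f = ∑ j ∈ Finset.range n, j * f j := by
  unfold pdeg
  apply Finsupp.sum_of_support_subset
  · intro j hj
    rw [Finset.mem_range]
    have := mem_le_sup hj
    omega
  · intro i _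
    ring

lemma eig_Lword (f : ℕ →₀ ℕ) : Eig V (-(pdeg f : ℂ)) (Lword V f) := by
  rw [Lword_def]
  have h := eig_prodRR V (f.support.sup id + 1) (fun k => XL V (-(k:ℤ)) ^ f k)
    (fun k => ((f k : ℂ)) * ((-(k:ℤ) : ℤ) : ℂ)) (fun j hj => eig_pow V (eig_XLneg V j) (f j))
  have hsum : (∑ j ∈ Finset.range (f.support.sup id + 1),
      ((f j : ℂ)) * ((-(j:ℤ) : ℤ) : ℂ)) = -(pdeg f : ℂ) := by
    rw [pdeg_eq_sum_range f (f.support.sup id + 1) (by omega)]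
    push_cast
    rw [← Finset.sum_neg_distrib]
    apply Finset.sum_congr rfl
    intro j _
    ring
  rwa [hsum] at h

lemma eig_Iword (f : ℕ →₀ ℕ) : Eig V (-(pdeg f : ℂ)) (Iword V f) := by
  rw [Iword_def]
  have h := eig_prodRR V (f.support.sup id + 1) (fun k => XI V (-(k:ℤ)) ^ f k)
    (fun k => ((f k : ℂ)) * ((-(k:ℤ) : ℤ) : ℂ)) (fun j hj => eig_pow V (eig_XIneg V j) (f j))
  have hsum : (∑ j ∈ Finset.range (f.support.sup id + 1),
      ((f j : ℂ)) * ((-(j:ℤ) : ℤ) : ℂ)) = -(pdeg f : ℂ) := by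
    rw [pdeg_eq_sum_range f (f.support.sup id + 1) (by omega)]
    push_cast
    rw [← Finset.sum_neg_distrib]
    apply Finset.sum_congr rfl
    intro j _
    ring
  rwa [hsum] at h

lemma lie_L0_word (lam mu : ℕ →₀ ℕ) :
    ⁅XL V 0, Lword V lam * Iword V mu⁆
      = (-(pdeg lam : ℂ) + -(pdeg mu : ℂ)) • (Lword V lam * Iword V mu) := by
  have h := eig_mul V (eig_Lword V lam) (eig_Iword V mu)
  unfold Eig at h
  rw [Ring.lie_def, h]
  abel

end AuxEig

open THV in
/-- `maxdeg([L_m, L_{−λ}I_{−μ}]w) ≤ |λ| + |μ| − m + 2`. -/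
theorem maxdeg_bracket_L_le
    (V : Type) [LieRing V] [LieAlgebra ℂ V] [THV V]
    (ψ : nPlus V →ₗ⁅ℂ⁆ ℂ)
    (hL1 : ψ ⟨THV.L 1, L_mem_nPlus V le_rfl⟩ ≠ 0)
    (hL2 : ψ ⟨THV.L 2, L_mem_nPlus V one_le_two⟩ ≠ 0)
    (hI1 : ψ ⟨THV.I 1, I_mem_nPlus V le_rfl⟩ ≠ 0)
    (B : Module.Basis WIdx ℂ (Mpsi V ψ)) (hB : IsStdBasis V ψ B)
    (m : ℤ) (hm : 0 ≤ m) (lam : ℕ →₀ ℕ) (mu : ℕ →₀ ℕ) (hmu : mu 0 = 0) :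
    maxdeg V ψ B (⁅ιV V (THV.L m), Lword V lam * Iword V mu⁆ • mw V ψ)
      ≤ (((pdeg lam : ℤ) + (pdeg mu : ℤ) - m + 2 : ℤ) : WithBot ℤ) := by
  have hiota : ιV V (THV.L m) = XL V m := rfl
  rcases eq_or_lt_of_le hm with hm0 | hm1
  · -- m = 0
    subst hm0
    have hb : ⁅ιV V (THV.L 0), Lword V lam * Iword V mu⁆
        = (-(pdeg lam : ℂ) + -(pdeg mu : ℂ)) • (Lword V lam * Iword V mu) :=
      lie_L0_word V lam mu
    rw [hb, smul_assoc]
    apply maxdeg_le_of_mem_Fsp V ψ B hB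
    apply Submodule.smul_mem
    have h2 : (Lword V lam * Iword V mu) • mw V ψ = mkM V ψ (Lword V lam * Iword V mu) := by
      rw [mw_eq, ← mkM_smul, mul_one]
    rw [h2]
    exact Fsp_mono V ψ (by omega) (mem_Fsp' V ψ lam mu hmu le_rfl)
  · -- 1 ≤ m
    have hm' : (1 : ℤ) ≤ m := hm1
    apply maxdeg_le_of_mem_Fsp V ψ B hB
    have hbr : ⁅ιV V (THV.L m), Lword V lam * Iword V mu⁆ • mw V ψ
        = mkM V ψ (XL V m * (Lword V lam * Iword V mu))
          - ψ ⟨THV.L m, L_mem_nPlus V hm'⟩ • mkM V ψ (Lword V lam * Iword V mu) := by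
      rw [Ring.lie_def, sub_smul, mw_eq, ← mkM_smul, ← mkM_smul, mul_one, mul_one,
        hiota, mkM_mul_XL V ψ _ m hm']
    rw [hbr]
    apply Submodule.sub_mem
    · exact Fsp_mono V ψ (by omega)
        (posL V ψ (psz lam + psz mu) lam mu hmu le_rfl m hm')
    · rcases lt_or_ge m 3 with hm2 | hm3
      · apply Submodule.smul_mem
        exact Fsp_mono V ψ (by omega) (mem_Fsp' V ψ lam mu hmu le_rfl)
      · rw [psiL_vanish V ψ m hm3 hm', zero_smul]
        exact Submodule.zero_mem _
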